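/- Let h be convex and suppose y_k satisfies (1/λ)(z − y_k − λg − w) ∈ ∂_ρ h(y_k) with ‖w‖ ≤ √(2λρ). Then for any points x_k, y_{k−1} and α ∈ [0,1], setting x̄ = αx_k + (1−α)y_{k−1} and using z = (1−α)y_{k−1} + αx_{k−1}: ⟨g, y_k − x̄⟩ + h(y_k) ≤ αh(x_k) + (1−α)h(y_{k−1}) − (1/λ)⟨w, y_k − x̄⟩ + ρ + (1/(2λ))(α²‖x_k − x_{k−1}‖² − ‖y_k − z‖²). -/

import Mathlib

open RealInnerProductSpace

/-- ρ-subgradient inequality for the y-update evaluated at the convex combination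
x̄ = αx_k + (1−α)y_{k−1}. -/
theorem stmt18 {E : Type*} [NormedAddCommGroup E] [InnerProductSpace ℝ E]
    (h : E → ℝ) (hconv : ConvexOn ℝ Set.univ h)
    (lam ρ : ℝ) (hlam : 0 < lam) (hρ : 0 ≤ ρ)
    (yk ykm1 xk xkm1 g w z : E)
    (hw : ‖w‖ ≤ Real.sqrt (2 * lam * ρ))
    (α : ℝ) (hα : α ∈ Set.Icc (0 : ℝ) 1)
    (hz : z = (1 - α) • ykm1 + α • xkm1)
    (hsub : ∀ u : E, h u ≥ h yk + ⟪(1 / lam) • (z - yk - lam • g - w), u - yk⟫ - ρ) :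
    ⟪g, yk - (α • xk + (1 - α) • ykm1)⟫ + h yk ≤
      α * h xk + (1 - α) * h ykm1
        - (1 / lam) * ⟪w, yk - (α • xk + (1 - α) • ykm1)⟫ + ρ
        + (1 / (2 * lam)) * (α ^ 2 * ‖xk - xkm1‖ ^ 2 - ‖yk - z‖ ^ 2) := by
  set xb := α • xk + (1 - α) • ykm1 with hxb
  have h1 := hsub xb
  have hconv' : h xb ≤ α * h xk + (1 - α) * h ykm1 := by
    have := hconv.2 (Set.mem_univ xk) (Set.mem_univ ykm1) hα.1 (by linarith [hα.2])
      (by ring : α + (1 - α) = 1)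
    simpa [hxb] using this
  have hinner : ⟪(1 / lam) • (z - yk - lam • g - w), xb - yk⟫ =
      (1 / lam) * (⟪z - yk, xb - yk⟫ - lam * ⟪g, xb - yk⟫ - ⟪w, xb - yk⟫) := by
    simp [real_inner_smul_left, inner_sub_left]
  have hid : 2 * ⟪z - yk, xb - yk⟫ = ‖z - yk‖ ^ 2 + ‖xb - yk‖ ^ 2 - ‖z - xb‖ ^ 2 := by
    have h0 : ‖(z - yk) - (xb - yk)‖ ^ 2 =
        ‖z - yk‖ ^ 2 - 2 * ⟪z - yk, xb - yk⟫ + ‖xb - yk‖ ^ 2 := norm_sub_sq_real _ _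
    have e : z - xb = (z - yk) - (xb - yk) := by abel
    rw [e]
    linarith
  have hzx : ‖z - xb‖ ^ 2 = α ^ 2 * ‖xk - xkm1‖ ^ 2 := by
    have e : z - xb = α • (xkm1 - xk) := by
      rw [hz, hxb]
      module
    rw [e, norm_smul, norm_sub_rev]
    simp [mul_pow, sq_abs]
  have hg : ⟪g, yk - xb⟫ = -⟪g, xb - yk⟫ := by
    rw [← inner_neg_right, neg_sub]
  have hwf : ⟪w, yk - xb⟫ = -⟪w, xb - yk⟫ := by
    rw [← inner_neg_right, neg_sub]
  have hnz : ‖yk - z‖ ^ 2 = ‖z - yk‖ ^ 2 := by rw [norm_sub_rev]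
  have hsq : (0 : ℝ) ≤ ‖xb - yk‖ ^ 2 := sq_nonneg _
  rw [hinner] at h1
  rw [hg, hwf, hnz, ← hzx]
  have hkey : -((1 / lam) * ⟪z - yk, xb - yk⟫) ≤
      (1 / (2 * lam)) * (‖z - xb‖ ^ 2 - ‖z - yk‖ ^ 2) := by
    have h2 : ‖z - yk‖ ^ 2 - ‖z - xb‖ ^ 2 ≤ 2 * ⟪z - yk, xb - yk⟫ := by linarith
    have h3 := mul_le_mul_of_nonneg_left h2 (by positivity : (0:ℝ) ≤ 1 / (2 * lam))
    have h4 : (1 / (2 * lam)) * (2 * ⟪z - yk, xb - yk⟫) = (1 / lam) * ⟪z - yk, xb - yk⟫ := by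
      field_simp
    linarith
  have he : 1 / lam * (⟪z - yk, xb - yk⟫ - lam * ⟪g, xb - yk⟫ - ⟪w, xb - yk⟫) =
      1 / lam * ⟪z - yk, xb - yk⟫ - ⟪g, xb - yk⟫ - 1 / lam * ⟪w, xb - yk⟫ := by
    field_simp
  linarith [he]
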